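/- Let I be a finite set, π = {α_i : i ∈ I} linearly independent vectors in a real vector space 𝔥*, and fix a subset J ⊆ I. Define, for λ, ν ∈ 𝔥*: ν ≤_J λ iff (1) λ − ν ∈ ℝ≥0·π and (2) writing λ − ν = β_J + β_{I∖J} with β_J ∈ ℝ≥0·π_J and β_{I∖J} ∈ ℝ≥0·π_{I∖J}, for every connected component C of supp(β_J) (connectivity with respect to a fixed Dynkin-diagram graph on I) there exists c ∈ C with ⟨α̌_c, λ − β_{I∖J}⟩ > 0, where α̌_c are fixed coroots. Then the relation ≤_J is transitive: if μ ≤_J ν and ν ≤_J λ then μ ≤_J λ. -/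

import Mathlib

open Finset

/-- The `J`-nondegeneracy relation `ν ≤_J λ`: `λ - ν` is a nonnegative real combination of the
simple roots, and writing `λ - ν = β_J + β_{I∖J}`, every connected component of `supp β_J`
(connectivity in the Dynkin diagram: `x ~ y` iff `x ≠ y` and `⟨α̌_x, α_y⟩ ≠ 0`) contains a node
`c` with `⟨α̌_c, λ - β_{I∖J}⟩ > 0`. -/
def leJ {ι H : Type*} [Fintype ι] [AddCommGroup H] [Module ℝ H]
    (α : ι → H) (coroot : ι → (H →ₗ[ℝ] ℝ)) (J : Set ι) (ν lam : H) : Prop :=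
  ∃ kJ kC : ι → ℝ,
    (∀ i, 0 ≤ kJ i) ∧ (∀ i, 0 ≤ kC i) ∧
    (∀ i, i ∉ J → kJ i = 0) ∧ (∀ i, i ∈ J → kC i = 0) ∧
    lam - ν = (∑ i, kJ i • α i) + (∑ i, kC i • α i) ∧
    (∀ c, kJ c ≠ 0 →
      ∃ c', Relation.ReflTransGen
          (fun x y => kJ x ≠ 0 ∧ kJ y ≠ 0 ∧ x ≠ y ∧ coroot x (α y) ≠ 0) c c' ∧
        0 < coroot c' (lam - ∑ i, kC i • α i))

/-- The relation `≤_J` is transitive. -/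
theorem leJ_trans {ι H : Type*} [Fintype ι] [AddCommGroup H] [Module ℝ H]
    (α : ι → H) (coroot : ι → (H →ₗ[ℝ] ℝ)) (J : Set ι)
    (hind : LinearIndependent ℝ α)
    (hdiag : ∀ i, coroot i (α i) = 2)
    (hoff : ∀ i j, i ≠ j → coroot i (α j) ≤ 0)
    (hsym : ∀ i j, coroot i (α j) = 0 ↔ coroot j (α i) = 0)
    (μ ν lam : H) (h1 : leJ α coroot J μ ν) (h2 : leJ α coroot J ν lam) :
    leJ α coroot J μ lam := by
  classical
  obtain ⟨k1, c1, hk1, hc1, hk1J, hc1J, hsum1, hcomp1⟩ := h1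
  obtain ⟨k2, c2, hk2, hc2, hk2J, hc2J, hsum2, hcomp2⟩ := h2
  -- the combined relation
  set R : ι → ι → Prop := fun x y =>
    (k1 x + k2 x ≠ 0) ∧ (k1 y + k2 y ≠ 0) ∧ x ≠ y ∧ coroot x (α y) ≠ 0 with hR
  have hne1 : ∀ x, k1 x ≠ 0 → k1 x + k2 x ≠ 0 := fun x h =>
    (add_pos_of_pos_of_nonneg ((hk1 x).lt_of_ne (Ne.symm h)) (hk2 x)).ne'
  have hne2 : ∀ x, k2 x ≠ 0 → k1 x + k2 x ≠ 0 := fun x h =>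
    (add_pos_of_nonneg_of_pos (hk1 x) ((hk2 x).lt_of_ne (Ne.symm h))).ne'
  refine ⟨fun i => k1 i + k2 i, fun i => c1 i + c2 i,
    fun i => add_nonneg (hk1 i) (hk2 i),
    fun i => add_nonneg (hc1 i) (hc2 i),
    fun i hi => by show k1 i + k2 i = 0; rw [hk1J i hi, hk2J i hi, add_zero],
    fun i hi => by show c1 i + c2 i = 0; rw [hc1J i hi, hc2J i hi, add_zero], ?_, ?_⟩
  · have h : lam - μ = (lam - ν) + (ν - μ) := by abel
    rw [h, hsum1, hsum2]
    simp only [add_smul, Finset.sum_add_distrib]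
    abel
  · intro c hc
    show ∃ c', Relation.ReflTransGen R c c' ∧
      0 < coroot c' (lam - ∑ i, (c1 i + c2 i) • α i)
    -- ends of R-paths stay in the support of k1 + k2
    have hend : ∀ {x y : ι}, Relation.ReflTransGen R x y →
        (k1 x + k2 x ≠ 0) → k1 y + k2 y ≠ 0 := by
      intro x y h hx
      induction h with
      | refl => exact hx
      | tail _ hr _ => exact hr.2.1
    by_cases hA : ∃ d, Relation.ReflTransGen R c d ∧ k2 d ≠ 0
    · -- the component of c meets the support of k2
      obtain ⟨d, hcd, hd2⟩ := hA
      obtain ⟨c', hdc', hpos⟩ := hcomp2 d hd2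
      have hmono : ∀ x y, (k2 x ≠ 0 ∧ k2 y ≠ 0 ∧ x ≠ y ∧ coroot x (α y) ≠ 0) → R x y :=
        fun x y h => ⟨hne2 x h.1, hne2 y h.2.1, h.2.2⟩
      have hcc' : Relation.ReflTransGen R c c' := hcd.trans (Relation.ReflTransGen.mono hmono _ _ hdc')
      have hc'2 : k2 c' ≠ 0 := by
        clear hcc'
        induction hdc' with
        | refl => exact hd2
        | tail _ hr _ => exact hr.2.1
      have hc'J : c' ∈ J := by
        by_contra hn; exact hc'2 (hk2J c' hn)
      refine ⟨c', hcc', ?_⟩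
      have key : (lam - ∑ i, (c1 i + c2 i) • α i)
          = (lam - ∑ i, c2 i • α i) - ∑ i, c1 i • α i := by
        simp only [add_smul, Finset.sum_add_distrib]; abel
      rw [key, map_sub]
      have hle : coroot c' (∑ i, c1 i • α i) ≤ 0 := by
        rw [map_sum]
        refine Finset.sum_nonpos fun i _ => ?_
        rw [map_smul, smul_eq_mul]
        by_cases h : c1 i = 0
        · simp [h]
        · have hiJ : i ∉ J := fun hiJ => h (hc1J i hiJ)
          exact mul_nonpos_of_nonneg_of_nonpos (hc1 i)
            (hoff c' i (fun e => hiJ (e ▸ hc'J)))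
      linarith
    · -- the component of c avoids the support of k2
      push_neg at hA
      have hc2z : k2 c = 0 := hA c Relation.ReflTransGen.refl
      have hc1ne : k1 c ≠ 0 := fun h => hc (by show k1 c + k2 c = 0; rw [h, hc2z, add_zero])
      obtain ⟨c', hcc'1, hpos⟩ := hcomp1 c hc1ne
      have hmono : ∀ x y, (k1 x ≠ 0 ∧ k1 y ≠ 0 ∧ x ≠ y ∧ coroot x (α y) ≠ 0) → R x y :=
        fun x y h => ⟨hne1 x h.1, hne1 y h.2.1, h.2.2⟩
      have hcc' : Relation.ReflTransGen R c c' := Relation.ReflTransGen.mono hmono _ _ hcc'1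
      refine ⟨c', hcc', ?_⟩
      have key : lam - ∑ i, (c1 i + c2 i) • α i
          = (ν - ∑ i, c1 i • α i) + ∑ i, k2 i • α i := by
        have h : lam = ν + ((∑ i, k2 i • α i) + ∑ i, c2 i • α i) := by
          rw [← hsum2]; abel
        rw [h]; simp only [add_smul, Finset.sum_add_distrib]; abel
      rw [key, map_add]
      have hz : coroot c' (∑ i, k2 i • α i) = 0 := by
        rw [map_sum]
        refine Finset.sum_eq_zero fun i _ => ?_
        rw [map_smul, smul_eq_mul]
        by_cases h2i : k2 i = 0
        · rw [h2i, zero_mul]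
        · by_cases hco : coroot c' (α i) = 0
          · rw [hco, mul_zero]
          · exfalso
            have hc'ne : k1 c' + k2 c' ≠ 0 := hend hcc' hc
            have hc'2 : k2 c' = 0 := hA c' hcc'
            have hne : c' ≠ i := fun e => h2i (e ▸ hc'2)
            have hRci : R c' i := ⟨hc'ne, hne2 i h2i, hne, hco⟩
            exact h2i (hA i (hcc'.tail hRci))
      rw [hz, add_zero]
      exact hpos
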